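/- Let $\mathcal{R}$ be an algebraic Kähler curvature tensor on $\mathbb{C}^n$, $n \geq 2$. For $\mathfrak{u} \in U(n)$, let $(f_1,\dots,f_n)$ be the unitary frame obtained by applying $\mathfrak{u}$ to the standard basis. Define $F(ij)(\mathfrak{u}) = \mathcal{R}(f_i,\bar f_i,f_j,\bar f_j)$ for $i \neq j$ and $G(i)(\mathfrak{u}) = \mathcal{R}(f_i,\bar f_i,f_i,\bar f_i)$. Then with respect to Haar probability measure $\nu$ on $U(n)$: $2\int_{U(n)} F(ij)\,d\nu = \int_{U(n)} G(k)\,d\nu$ for all $i \neq j$ and all $k$; in particular both sides equal a constant $K$ independent of the indices. -/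

import Mathlib

open Finset

noncomputable section

/-- An algebraic Kähler curvature tensor on `ℂⁿ`: complex linear in the first and
third (unbarred) slots, conjugate linear in the second and fourth (barred) slots,
with the pair symmetry `R(X,Ȳ,Z,W̄) = R(Z,W̄,X,Ȳ)`, the Kähler symmetry
`R(X,Ȳ,Z,W̄) = R(Z,Ȳ,X,W̄)`, and the reality condition
`conj R(X,Ȳ,Z,W̄) = R(Y,X̄,W,Z̄)`. -/
structure AKCT (n : ℕ) where
  R : (Fin n → ℂ) → (Fin n → ℂ) → (Fin n → ℂ) → (Fin n → ℂ) → ℂ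
  smul_fst : ∀ (a : ℂ) (X Y Z W), R (a • X) Y Z W = a * R X Y Z W
  add_fst : ∀ (X X' Y Z W), R (X + X') Y Z W = R X Y Z W + R X' Y Z W
  smul_snd : ∀ (a : ℂ) (X Y Z W), R X (a • Y) Z W = (starRingEnd ℂ) a * R X Y Z W
  add_snd : ∀ (X Y Y' Z W), R X (Y + Y') Z W = R X Y Z W + R X Y' Z W
  pair_symm : ∀ (X Y Z W), R X Y Z W = R Z W X Y
  kahler_symm : ∀ (X Y Z W), R X Y Z W = R Z Y X W
  conj_symm : ∀ (X Y Z W), (starRingEnd ℂ) (R X Y Z W) = R Y X W Z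

/-- The standard Hermitian inner product on `ℂⁿ` (conjugate linear in the first slot). -/
def hermInner {n : ℕ} (v w : Fin n → ℂ) : ℂ := ∑ k, (starRingEnd ℂ) (v k) * w k

/-- A unitary frame of `ℂⁿ`. -/
def UnitaryFrame {n : ℕ} (e : Fin n → Fin n → ℂ) : Prop :=
  ∀ i j, hermInner (e i) (e j) = if i = j then 1 else 0

/-- An orthonormal (unitary) pair of vectors in `ℂⁿ`. -/
def OrthPair {n : ℕ} (V W : Fin n → ℂ) : Prop :=
  hermInner V V = 1 ∧ hermInner W W = 1 ∧ hermInner V W = 0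

/-- Nonnegative quadratic orthogonal bisectional curvature. -/
def NQOBC {n : ℕ} (𝓡 : AKCT n) : Prop :=
  ∀ e : Fin n → Fin n → ℂ, UnitaryFrame e →
    ∀ ξ : Fin n → ℝ,
      0 ≤ ∑ i, ∑ j, (𝓡.R (e i) (e i) (e j) (e j)).re * (ξ i - ξ j) ^ 2

/-- The `k`-th standard basis vector of `ℂⁿ`. -/
def stdVec {n : ℕ} (k : Fin n) : Fin n → ℂ := fun m => if m = k then 1 else 0

/-- The scalar curvature of an algebraic Kähler curvature tensor
(computed in the standard basis). -/
def scalarCurv {n : ℕ} (𝓡 : AKCT n) : ℝ :=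
  ∑ i, ∑ j, (𝓡.R (stdVec i) (stdVec i) (stdVec j) (stdVec j)).re

end

noncomputable section

open MeasureTheory

/-- The unitary frame obtained by applying `u ∈ U(n)` to the standard basis:
`f_j = ∑_k u_{kj} e_k`, i.e. the `j`-th column of `u`. -/
def uFrame {n : ℕ} (u : Matrix.unitaryGroup (Fin n) ℂ) : Fin n → Fin n → ℂ :=
  fun j m => (u : Matrix (Fin n) (Fin n) ℂ) m j


namespace Stmt8Aux

variable {n : ℕ}

def plantM (i j : Fin n) (a b c d : ℂ) : Matrix (Fin n) (Fin n) ℂ :=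
  Matrix.of fun k l =>
    (if l = i then a else if l = j then b else 0) * (if k = i then 1 else 0)
    + (if l = i then c else if l = j then d else 0) * (if k = j then 1 else 0)
    + (if l = i ∨ l = j then 0 else if k = l then 1 else 0)

lemma plantM_col_i {i j : Fin n} (hij : i ≠ j) (a b c d : ℂ) (m : Fin n) :
    plantM i j a b c d m i = a * (if m = i then 1 else 0) + c * (if m = j then 1 else 0) := by
  simp [plantM]

lemma plantM_col_j {i j : Fin n} (hij : i ≠ j) (a b c d : ℂ) (m : Fin n) :
    plantM i j a b c d m j = b * (if m = i then 1 else 0) + d * (if m = j then 1 else 0) := by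
  simp [plantM, hij.symm]

lemma plantM_col_other {i j : Fin n} (a b c d : ℂ) {l : Fin n} (hli : l ≠ i) (hlj : l ≠ j)
    (m : Fin n) :
    plantM i j a b c d m l = 1 * (if m = l then 1 else 0) + 0 * (if m = l then 1 else 0) := by
  simp [plantM, hli, hlj]

lemma sum_ind (x y : ℂ) (p q : Fin n) :
    (∑ m, (starRingEnd ℂ) (x * (if m = p then 1 else 0)) * (y * (if m = q then 1 else 0)))
      = if p = q then (starRingEnd ℂ) x * y else 0 := by
  simp only [mul_ite, mul_one, mul_zero, apply_ite (starRingEnd ℂ), map_zero, ite_mul, zero_mul]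
  rcases eq_or_ne p q with rfl | hpq
  · rw [Finset.sum_eq_single p]
    · simp
    · intro b _ hb; simp [hb]
    · simp
  · rw [Finset.sum_eq_zero, if_neg hpq]
    intro m _
    rcases eq_or_ne m p with rfl | hmp
    · simp [hpq]
    · simp [hmp]

lemma plantM_mem {i j : Fin n} (hij : i ≠ j) {a b c d : ℂ}
    (h1 : (starRingEnd ℂ) a * a + (starRingEnd ℂ) c * c = 1)
    (h2 : (starRingEnd ℂ) b * b + (starRingEnd ℂ) d * d = 1)
    (h3 : (starRingEnd ℂ) a * b + (starRingEnd ℂ) c * d = 0) :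
    plantM i j a b c d ∈ Matrix.unitaryGroup (Fin n) ℂ := by
  have h3' : a * (starRingEnd ℂ) b + c * (starRingEnd ℂ) d = 0 := by
    have := congrArg (starRingEnd ℂ) h3
    simp only [map_add, map_mul, RingHomCompTriple.comp_apply, map_zero, RingHom.id_apply,
      Complex.conj_conj] at this
    linear_combination this
  rw [Matrix.mem_unitaryGroup_iff']
  ext k l
  rw [Matrix.mul_apply, Matrix.one_apply]
  have hstar : ∀ m k', (star (plantM i j a b c d)) k' m
      = (starRingEnd ℂ) (plantM i j a b c d m k') := fun m k' => rfl
  simp only [hstar]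
  rcases eq_or_ne k i with hk | hki
  · rw [hk]
    rcases eq_or_ne l i with hl | hli
    · rw [hl]
      simp only [plantM_col_i hij, map_add, add_mul, mul_add, Finset.sum_add_distrib, sum_ind]
      simp only [eq_self_iff_true, if_true, if_neg hij, if_neg hij.symm, add_zero, zero_add]
      linear_combination h1
    · rcases eq_or_ne l j with hl | hlj
      · rw [hl]
        simp only [plantM_col_i hij, plantM_col_j hij, map_add, add_mul, mul_add,
          Finset.sum_add_distrib, sum_ind]
        simp only [eq_self_iff_true, if_true, if_neg hij, if_neg hij.symm, add_zero, zero_add]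
        linear_combination h3
      · simp only [plantM_col_i hij, plantM_col_other a b c d hli hlj, map_add, add_mul,
          mul_add, Finset.sum_add_distrib, sum_ind]
        simp [Ne.symm hli, Ne.symm hlj, hli, hlj]
  · rcases eq_or_ne k j with hk | hkj
    · rw [hk]
      rcases eq_or_ne l i with hl | hli
      · rw [hl]
        simp only [plantM_col_i hij, plantM_col_j hij, map_add, add_mul, mul_add,
          Finset.sum_add_distrib, sum_ind]
        simp only [eq_self_iff_true, if_true, if_neg hij, if_neg hij.symm, add_zero, zero_add]
        linear_combination h3'
      · rcases eq_or_ne l j with hl | hlj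
        · rw [hl]
          simp only [plantM_col_j hij, map_add, add_mul, mul_add, Finset.sum_add_distrib,
            sum_ind]
          simp only [eq_self_iff_true, if_true, if_neg hij, if_neg hij.symm, add_zero, zero_add]
          linear_combination h2
        · simp only [plantM_col_j hij, plantM_col_other a b c d hli hlj, map_add, add_mul,
            mul_add, Finset.sum_add_distrib, sum_ind]
          simp [Ne.symm hli, Ne.symm hlj, hli, hlj]
    · rcases eq_or_ne l i with hl | hli
      · rw [hl]
        simp only [plantM_col_i hij, plantM_col_other a b c d hki hkj, map_add, add_mul,
          mul_add, Finset.sum_add_distrib, sum_ind]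
        simp [hki, hkj, Ne.symm hki, Ne.symm hkj]
      · rcases eq_or_ne l j with hl | hlj
        · rw [hl]
          simp only [plantM_col_j hij, plantM_col_other a b c d hki hkj, map_add, add_mul,
            mul_add, Finset.sum_add_distrib, sum_ind]
          simp [hki, hkj, Ne.symm hki, Ne.symm hkj]
        · simp only [plantM_col_other a b c d hki hkj, plantM_col_other a b c d hli hlj,
            map_add, add_mul, mul_add, Finset.sum_add_distrib, sum_ind]
          simp

def plantU (i j : Fin n) (a b c d : ℂ) (hij : i ≠ j)
    (h1 : (starRingEnd ℂ) a * a + (starRingEnd ℂ) c * c = 1)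
    (h2 : (starRingEnd ℂ) b * b + (starRingEnd ℂ) d * d = 1)
    (h3 : (starRingEnd ℂ) a * b + (starRingEnd ℂ) c * d = 0) :
    Matrix.unitaryGroup (Fin n) ℂ :=
  ⟨plantM i j a b c d, plantM_mem hij h1 h2 h3⟩

lemma uFrame_mul_i {i j : Fin n} (hij : i ≠ j) (a b c d : ℂ)
    (u w : Matrix.unitaryGroup (Fin n) ℂ)
    (hw : (w : Matrix (Fin n) (Fin n) ℂ) = plantM i j a b c d) :
    uFrame (u * w) i = a • uFrame u i + c • uFrame u j := by
  funext m
  show ((u : Matrix (Fin n) (Fin n) ℂ) * (w : Matrix (Fin n) (Fin n) ℂ)) m i = _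
  rw [hw, Matrix.mul_apply]
  simp only [plantM_col_i hij, mul_add, mul_ite, mul_one, mul_zero, Finset.sum_add_distrib,
    Finset.sum_ite_eq', Finset.mem_univ, if_true]
  show _ = a * uFrame u i m + c * uFrame u j m
  simp [uFrame, mul_comm]

lemma uFrame_mul_j {i j : Fin n} (hij : i ≠ j) (a b c d : ℂ)
    (u w : Matrix.unitaryGroup (Fin n) ℂ)
    (hw : (w : Matrix (Fin n) (Fin n) ℂ) = plantM i j a b c d) :
    uFrame (u * w) j = b • uFrame u i + d • uFrame u j := by
  funext m
  show ((u : Matrix (Fin n) (Fin n) ℂ) * (w : Matrix (Fin n) (Fin n) ℂ)) m j = _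
  rw [hw, Matrix.mul_apply]
  simp only [plantM_col_j hij, mul_add, mul_ite, mul_one, mul_zero, Finset.sum_add_distrib,
    Finset.sum_ite_eq', Finset.mem_univ, if_true]
  show _ = b * uFrame u i m + d * uFrame u j m
  simp [uFrame, mul_comm]

lemma uFrame_mul_other {i j : Fin n} (a b c d : ℂ) {l : Fin n} (hli : l ≠ i) (hlj : l ≠ j)
    (u w : Matrix.unitaryGroup (Fin n) ℂ)
    (hw : (w : Matrix (Fin n) (Fin n) ℂ) = plantM i j a b c d) :
    uFrame (u * w) l = uFrame u l := by
  funext m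
  show ((u : Matrix (Fin n) (Fin n) ℂ) * (w : Matrix (Fin n) (Fin n) ℂ)) m l = _
  rw [hw, Matrix.mul_apply]
  simp only [plantM_col_other a b c d hli hlj, one_mul, zero_mul, add_zero, ite_self, mul_ite,
    mul_one, mul_zero, zero_add, Finset.sum_ite_eq', Finset.mem_univ, if_true]
  rfl


lemma ug_isCompact : IsCompact (Matrix.unitaryGroup (Fin n) ℂ : Set (Matrix (Fin n) (Fin n) ℂ)) := by
  have hball : IsCompact
      (Set.pi Set.univ (fun _ : Fin n => Set.pi Set.univ fun _ : Fin n => Metric.closedBall (0:ℂ) 1)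
        : Set (Matrix (Fin n) (Fin n) ℂ)) :=
    isCompact_univ_pi fun _ => isCompact_univ_pi fun _ => isCompact_closedBall _ _
  apply hball.of_isClosed_subset
  · have h1 : IsClosed {A : Matrix (Fin n) (Fin n) ℂ | star A * A = 1} :=
      isClosed_eq (continuous_star.matrix_mul continuous_id) continuous_const
    have h2 : IsClosed {A : Matrix (Fin n) (Fin n) ℂ | A * star A = 1} :=
      isClosed_eq (continuous_id.matrix_mul continuous_star) continuous_const
    have : (Matrix.unitaryGroup (Fin n) ℂ : Set (Matrix (Fin n) (Fin n) ℂ))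
        = {A | star A * A = 1} ∩ {A | A * star A = 1} := by
      ext A
      simp [Unitary.mem_iff, Set.mem_inter_iff]
    rw [this]
    exact h1.inter h2
  · intro A hA
    rw [Set.mem_pi]
    intro a _
    rw [Set.mem_pi]
    intro b _
    rw [Metric.mem_closedBall, dist_zero_right]
    exact entry_norm_bound_of_unitary hA a b

instance : CompactSpace (Matrix.unitaryGroup (Fin n) ℂ) :=
  isCompact_iff_compactSpace.mp ug_isCompact

instance : IsTopologicalGroup (Matrix.unitaryGroup (Fin n) ℂ) where
  continuous_mul := by
    apply continuous_induced_rng.mpr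
    exact (continuous_subtype_val.comp continuous_fst).matrix_mul
      (continuous_subtype_val.comp continuous_snd)
  continuous_inv := by
    apply continuous_induced_rng.mpr
    exact continuous_star.comp continuous_subtype_val

lemma ug_right_invariant [MeasurableSpace (Matrix.unitaryGroup (Fin n) ℂ)]
    [BorelSpace (Matrix.unitaryGroup (Fin n) ℂ)]
    (ν : Measure (Matrix.unitaryGroup (Fin n) ℂ))
    [ν.IsMulLeftInvariant] [IsProbabilityMeasure ν] :
    ν.IsMulRightInvariant := by
  haveI : ν.IsOpenPosMeasure :=
    isOpenPosMeasure_of_mulLeftInvariant_of_compact Set.univ isCompact_univ (by simp)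
  haveI : ν.IsHaarMeasure :=
    { toIsFiniteMeasureOnCompacts := inferInstance
      toIsMulLeftInvariant := inferInstance
      toIsOpenPosMeasure := inferInstance }
  constructor
  intro g
  set ν' := Measure.map (· * g) ν with hν'
  haveI : ν'.IsMulLeftInvariant := by
    rw [hν']
    infer_instance
  haveI : IsProbabilityMeasure ν' :=
    Measure.isProbabilityMeasure_map (measurable_mul_const g).aemeasurable
  haveI : ν'.IsOpenPosMeasure :=
    isOpenPosMeasure_of_mulLeftInvariant_of_compact Set.univ isCompact_univ (by simp)
  haveI : ν'.IsHaarMeasure :=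
    { toIsFiniteMeasureOnCompacts := inferInstance
      toIsMulLeftInvariant := inferInstance
      toIsOpenPosMeasure := inferInstance }
  exact Measure.isHaarMeasure_eq_of_isProbabilityMeasure ν' ν


end Stmt8Aux

namespace AKCT
variable {n : ℕ} (𝓡 : AKCT n)



lemma smul_trd (a : ℂ) (X Y Z W) : 𝓡.R X Y (a • Z) W = a * 𝓡.R X Y Z W := by
  rw [𝓡.pair_symm, 𝓡.smul_fst, 𝓡.pair_symm Z]

lemma add_trd (X Y Z Z' W) : 𝓡.R X Y (Z + Z') W = 𝓡.R X Y Z W + 𝓡.R X Y Z' W := by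
  rw [𝓡.pair_symm, 𝓡.add_fst, 𝓡.pair_symm Z, 𝓡.pair_symm Z']

lemma smul_fth (a : ℂ) (X Y Z W) : 𝓡.R X Y Z (a • W) = (starRingEnd ℂ) a * 𝓡.R X Y Z W := by
  rw [𝓡.pair_symm X Y Z (a • W), 𝓡.smul_snd, 𝓡.pair_symm Z W X Y]

lemma add_fth (X Y Z W W') : 𝓡.R X Y Z (W + W') = 𝓡.R X Y Z W + 𝓡.R X Y Z W' := by
  rw [𝓡.pair_symm X Y Z (W + W'), 𝓡.add_snd, 𝓡.pair_symm Z W X Y, 𝓡.pair_symm Z W' X Y]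


lemma zero_fst (Y Z W) : 𝓡.R 0 Y Z W = 0 := by
  have := 𝓡.smul_fst 0 0 Y Z W
  simpa using this

lemma sum_fst {ι : Type*} [DecidableEq ι] (s : Finset ι) (f : ι → Fin n → ℂ) (Y Z W) :
    𝓡.R (∑ i ∈ s, f i) Y Z W = ∑ i ∈ s, 𝓡.R (f i) Y Z W := by
  induction s using Finset.induction_on with
  | empty => simpa using 𝓡.zero_fst Y Z W
  | insert _ _ h ih => rw [Finset.sum_insert h, 𝓡.add_fst, ih, Finset.sum_insert h]

lemma sum_snd {ι : Type*} [DecidableEq ι] (s : Finset ι) (f : ι → Fin n → ℂ) (X Z W) :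
    𝓡.R X (∑ i ∈ s, f i) Z W = ∑ i ∈ s, 𝓡.R X (f i) Z W := by
  have h := congrArg (starRingEnd ℂ) (𝓡.sum_fst s f X W Z)
  rw [map_sum] at h
  calc 𝓡.R X (∑ i ∈ s, f i) Z W
      = (starRingEnd ℂ) (𝓡.R (∑ i ∈ s, f i) X W Z) := by rw [𝓡.conj_symm]
    _ = ∑ i ∈ s, (starRingEnd ℂ) (𝓡.R (f i) X W Z) := h
    _ = ∑ i ∈ s, 𝓡.R X (f i) Z W := Finset.sum_congr rfl fun i _ => 𝓡.conj_symm _ _ _ _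

lemma sum_trd {ι : Type*} [DecidableEq ι] (s : Finset ι) (f : ι → Fin n → ℂ) (X Y W) :
    𝓡.R X Y (∑ i ∈ s, f i) W = ∑ i ∈ s, 𝓡.R X Y (f i) W := by
  rw [𝓡.pair_symm, 𝓡.sum_fst]
  exact Finset.sum_congr rfl fun i _ => (𝓡.pair_symm _ _ _ _)

lemma sum_fth {ι : Type*} [DecidableEq ι] (s : Finset ι) (f : ι → Fin n → ℂ) (X Y Z) :
    𝓡.R X Y Z (∑ i ∈ s, f i) = ∑ i ∈ s, 𝓡.R X Y Z (f i) := by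
  rw [𝓡.pair_symm, 𝓡.sum_snd]
  exact Finset.sum_congr rfl fun i _ => (𝓡.pair_symm _ _ _ _)

lemma rep (X : Fin n → ℂ) : X = ∑ a, X a • stdVec a := by
  funext m
  simp [stdVec, Finset.sum_ite_eq']

lemma expand_basis (X Y Z W : Fin n → ℂ) :
    𝓡.R X Y Z W = ∑ a, ∑ b, ∑ c, ∑ d,
      X a * ((starRingEnd ℂ) (Y b) * (Z c * ((starRingEnd ℂ) (W d)
        * 𝓡.R (stdVec a) (stdVec b) (stdVec c) (stdVec d)))) := by
  conv_lhs => rw [rep X, rep Y, rep Z, rep W]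
  rw [𝓡.sum_fst]
  refine Finset.sum_congr rfl fun a _ => ?_
  rw [𝓡.smul_fst, 𝓡.sum_snd, Finset.mul_sum]
  refine Finset.sum_congr rfl fun b _ => ?_
  rw [𝓡.smul_snd, 𝓡.sum_trd, Finset.mul_sum, Finset.mul_sum]
  refine Finset.sum_congr rfl fun c _ => ?_
  rw [𝓡.smul_trd, 𝓡.sum_fth, Finset.mul_sum, Finset.mul_sum, Finset.mul_sum]
  refine Finset.sum_congr rfl fun d _ => ?_
  rw [𝓡.smul_fth]

lemma continuous_R_frame (i j k l : Fin n) :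
    Continuous fun u : Matrix.unitaryGroup (Fin n) ℂ =>
      (𝓡.R (uFrame u i) (uFrame u j) (uFrame u k) (uFrame u l)).re := by
  have hcoord : ∀ (a b : Fin n),
      Continuous fun u : Matrix.unitaryGroup (Fin n) ℂ => (u : Matrix (Fin n) (Fin n) ℂ) a b :=
    fun a b => continuous_subtype_val.matrix_elem a b
  apply Complex.continuous_re.comp
  have : (fun u : Matrix.unitaryGroup (Fin n) ℂ =>
      𝓡.R (uFrame u i) (uFrame u j) (uFrame u k) (uFrame u l))
      = fun u => ∑ a, ∑ b, ∑ c, ∑ d,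
        uFrame u i a * ((starRingEnd ℂ) (uFrame u j b) * (uFrame u k c
          * ((starRingEnd ℂ) (uFrame u l d)
            * 𝓡.R (stdVec a) (stdVec b) (stdVec c) (stdVec d)))) := by
    funext u
    rw [𝓡.expand_basis]
  rw [this]
  refine continuous_finset_sum _ fun a _ => continuous_finset_sum _ fun b _ =>
    continuous_finset_sum _ fun c _ => continuous_finset_sum _ fun d _ => ?_
  have h1 : Continuous fun u : Matrix.unitaryGroup (Fin n) ℂ => uFrame u i a := hcoord a i
  have h2 : Continuous fun u : Matrix.unitaryGroup (Fin n) ℂ =>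
      (starRingEnd ℂ) (uFrame u j b) := Continuous.star (hcoord b j)
  have h3 : Continuous fun u : Matrix.unitaryGroup (Fin n) ℂ => uFrame u k c := hcoord c k
  have h4 : Continuous fun u : Matrix.unitaryGroup (Fin n) ℂ =>
      (starRingEnd ℂ) (uFrame u l d) := Continuous.star (hcoord d l)
  exact h1.mul (h2.mul (h3.mul ((h4.mul continuous_const))))


/-- The key pointwise identity. -/
lemma key (V W : Fin n → ℂ) (s : ℝ) (hs : (s:ℂ)^2 = 1/2) :
    𝓡.R V V W W
      + 𝓡.R (((1+Complex.I)/2) • V + ((1-Complex.I)/2) • W)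
             (((1+Complex.I)/2) • V + ((1-Complex.I)/2) • W)
             (((1-Complex.I)/2) • V + ((1+Complex.I)/2) • W)
             (((1-Complex.I)/2) • V + ((1+Complex.I)/2) • W)
    = (1/2) * (𝓡.R ((s:ℂ) • V + (s:ℂ) • W) ((s:ℂ) • V + (s:ℂ) • W)
                    ((s:ℂ) • V + (s:ℂ) • W) ((s:ℂ) • V + (s:ℂ) • W)
             + 𝓡.R ((s:ℂ) • V + (-(s:ℂ)) • W) ((s:ℂ) • V + (-(s:ℂ)) • W)
                    ((s:ℂ) • V + (-(s:ℂ)) • W) ((s:ℂ) • V + (-(s:ℂ)) • W)) := by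
  have hWWVV : 𝓡.R W W V V = 𝓡.R V V W W := 𝓡.pair_symm W W V V
  have hVWWV : 𝓡.R V W W V = 𝓡.R V V W W :=
    (𝓡.kahler_symm V W W V).trans (𝓡.pair_symm W W V V)
  have hWVVW : 𝓡.R W V V W = 𝓡.R V V W W := 𝓡.kahler_symm W V V W
  have hVWVV : 𝓡.R V W V V = 𝓡.R V V V W := 𝓡.pair_symm V W V V
  have hVVWV : 𝓡.R V V W V = 𝓡.R W V V V := 𝓡.pair_symm V V W V
  have hWWVW : 𝓡.R W W V W = 𝓡.R V W W W := 𝓡.pair_symm W W V W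
  have hWVWW : 𝓡.R W V W W = 𝓡.R W W W V := 𝓡.pair_symm W V W W
  simp only [𝓡.add_fst, 𝓡.add_snd, 𝓡.add_trd, 𝓡.add_fth,
    𝓡.smul_fst, 𝓡.smul_snd, 𝓡.smul_trd, 𝓡.smul_fth,
    map_div₀, map_add, map_sub, map_one, map_ofNat, Complex.conj_I, Complex.conj_ofReal, map_neg]
  linear_combination ((1/16:ℂ) + (-1:ℂ)*(s:ℂ)^4 + (-1/8:ℂ)*Complex.I^2 + (1/16:ℂ)*Complex.I^4) * hWWVV
    + ((1/16:ℂ) + (-1:ℂ)*(s:ℂ)^4 + (1/4:ℂ)*Complex.I + (3/8:ℂ)*Complex.I^2 + (1/4:ℂ)*Complex.I^3 + (1/16:ℂ)*Complex.I^4) * hVWWV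
    + ((1/16:ℂ) + (-1:ℂ)*(s:ℂ)^4 + (-1/4:ℂ)*Complex.I + (3/8:ℂ)*Complex.I^2 + (-1/4:ℂ)*Complex.I^3 + (1/16:ℂ)*Complex.I^4) * hWVVW
    + ((1/16:ℂ) + (1/8:ℂ)*Complex.I + (-1/8:ℂ)*Complex.I^3 + (-1/16:ℂ)*Complex.I^4) * hVWVV
    + ((1/16:ℂ) + (1/8:ℂ)*Complex.I + (-1/8:ℂ)*Complex.I^3 + (-1/16:ℂ)*Complex.I^4) * hVVWV
    + ((1/16:ℂ) + (-1/8:ℂ)*Complex.I + (1/8:ℂ)*Complex.I^3 + (-1/16:ℂ)*Complex.I^4) * hWWVW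
    + ((1/16:ℂ) + (-1/8:ℂ)*Complex.I + (1/8:ℂ)*Complex.I^3 + (-1/16:ℂ)*Complex.I^4) * hWVWW
    + (((-2:ℂ) + (-4:ℂ)*(s:ℂ)^2) * (𝓡.R V V W W) + ((-1/2:ℂ) + (-1:ℂ)*(s:ℂ)^2) * (𝓡.R V V V V) + ((-1/2:ℂ) + (-1:ℂ)*(s:ℂ)^2) * (𝓡.R V W V W) + ((-1/2:ℂ) + (-1:ℂ)*(s:ℂ)^2) * (𝓡.R W V W V) + ((-1/2:ℂ) + (-1:ℂ)*(s:ℂ)^2) * (𝓡.R W W W W)) * hs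
    + (((1/4:ℂ) + (1/4:ℂ)*Complex.I^2) * (𝓡.R V V W W) + ((-3/16:ℂ) + (1/16:ℂ)*Complex.I^2) * (𝓡.R V V V V) + ((1/8:ℂ) + (-1/8:ℂ)*Complex.I^2) * (𝓡.R V V V W) + ((-3/16:ℂ) + (1/16:ℂ)*Complex.I^2) * (𝓡.R V W V W) + ((1/8:ℂ) + (-1/8:ℂ)*Complex.I^2) * (𝓡.R V W W W) + ((1/8:ℂ) + (-1/8:ℂ)*Complex.I^2) * (𝓡.R W V V V) + ((-3/16:ℂ) + (1/16:ℂ)*Complex.I^2) * (𝓡.R W V W V) + ((1/8:ℂ) + (-1/8:ℂ)*Complex.I^2) * (𝓡.R W W W V) + ((-3/16:ℂ) + (1/16:ℂ)*Complex.I^2) * (𝓡.R W W W W)) * Complex.I_sq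


end AKCT

/-- Claim in Lemma 3.2: with respect to Haar probability measure on
`U(n)`, `2∫ F(ij) dν = ∫ G(k) dν` for all `i ≠ j` and all `k`. -/
theorem stmt8 (n : ℕ) (hn : 2 ≤ n)
    [MeasurableSpace (Matrix.unitaryGroup (Fin n) ℂ)] [BorelSpace (Matrix.unitaryGroup (Fin n) ℂ)]
    (𝓡 : AKCT n)
    (ν : Measure (Matrix.unitaryGroup (Fin n) ℂ))
    [ν.IsMulLeftInvariant] [IsProbabilityMeasure ν]
    (F : Fin n → Fin n → Matrix.unitaryGroup (Fin n) ℂ → ℝ)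
    (G : Fin n → Matrix.unitaryGroup (Fin n) ℂ → ℝ)
    (hF : ∀ i j u, F i j u = (𝓡.R (uFrame u i) (uFrame u i) (uFrame u j) (uFrame u j)).re)
    (hG : ∀ i u, G i u = (𝓡.R (uFrame u i) (uFrame u i) (uFrame u i) (uFrame u i)).re) :
    ∀ i j k : Fin n, i ≠ j → 2 * ∫ u, F i j u ∂ν = ∫ u, G k u ∂ν := by
  intro i j k hij
  haveI hRI : ν.IsMulRightInvariant := Stmt8Aux.ug_right_invariant ν
  -- continuity and integrability
  have hGcont : ∀ m : Fin n, Continuous (G m) := by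
    intro m
    have : G m = fun u => (𝓡.R (uFrame u m) (uFrame u m) (uFrame u m) (uFrame u m)).re :=
      funext fun u => hG m u
    rw [this]
    exact 𝓡.continuous_R_frame m m m m
  have hFcont : Continuous (F i j) := by
    have : F i j = fun u => (𝓡.R (uFrame u i) (uFrame u i) (uFrame u j) (uFrame u j)).re :=
      funext fun u => hF i j u
    rw [this]
    exact 𝓡.continuous_R_frame i i j j
  have hGint : ∀ m : Fin n, Integrable (G m) ν := fun m =>
    (hGcont m).integrable_of_hasCompactSupport (HasCompactSupport.of_compactSpace _)
  have hFint : Integrable (F i j) ν :=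
    hFcont.integrable_of_hasCompactSupport (HasCompactSupport.of_compactSpace _)
  -- Step A : all G-integrals agree
  have hGswap : ∀ m m' : Fin n, ∫ u, G m u ∂ν = ∫ u, G m' u ∂ν := by
    intro m m'
    rcases eq_or_ne m m' with rfl | hmm'
    · rfl
    · have h1 : (starRingEnd ℂ) (0:ℂ) * 0 + (starRingEnd ℂ) (1:ℂ) * 1 = 1 := by simp
      have h3 : (starRingEnd ℂ) (0:ℂ) * 1 + (starRingEnd ℂ) (1:ℂ) * 0 = 0 := by simp
      have h2 : (starRingEnd ℂ) (1:ℂ) * 1 + (starRingEnd ℂ) (0:ℂ) * 0 = 1 := by simp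
      set w : Matrix.unitaryGroup (Fin n) ℂ := Stmt8Aux.plantU m m' 0 1 1 0 hmm' h1 h2 h3 with hw
      have hframe : ∀ u : Matrix.unitaryGroup (Fin n) ℂ, uFrame (u * w) m = uFrame u m' := by
        intro u
        rw [Stmt8Aux.uFrame_mul_i hmm' 0 1 1 0 u w rfl]
        funext x
        simp
      have hpt : ∀ u, G m (u * w) = G m' u := by
        intro u
        rw [hG, hG, hframe u]
      calc ∫ u, G m u ∂ν = ∫ u, G m (u * w) ∂ν := (integral_mul_right_eq_self (G m) w).symm
        _ = ∫ u, G m' u ∂ν := integral_congr_ae (Filter.Eventually.of_forall fun u => hpt u)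
  -- Step B : the key identity
  set s : ℝ := (Real.sqrt 2)⁻¹ with hsdef
  have hs : ((s:ℝ):ℂ)^2 = 1/2 := by
    have hR : (s:ℝ)^2 = 1/2 := by
      rw [hsdef, inv_pow, Real.sq_sqrt (by norm_num : (0:ℝ) ≤ 2)]
      norm_num
    calc ((s:ℝ):ℂ)^2 = (((s:ℝ)^2 : ℝ) : ℂ) := by push_cast; ring
      _ = ((1/2 : ℝ) : ℂ) := by rw [hR]
      _ = 1/2 := by norm_num
  have hconjs : (starRingEnd ℂ) ((s:ℝ):ℂ) = ((s:ℝ):ℂ) := Complex.conj_ofReal s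
  have hca : (starRingEnd ℂ) ((1+Complex.I)/2) = (1-Complex.I)/2 := by
    simp [map_div₀, map_ofNat, Complex.conj_I]
    ring
  have hcb : (starRingEnd ℂ) ((1-Complex.I)/2) = (1+Complex.I)/2 := by
    simp [map_div₀, map_ofNat, Complex.conj_I]
  -- the two special unitaries
  have hu1 : (starRingEnd ℂ) ((1+Complex.I)/2) * ((1+Complex.I)/2)
      + (starRingEnd ℂ) ((1-Complex.I)/2) * ((1-Complex.I)/2) = 1 := by
    rw [hca, hcb]
    linear_combination (-(1:ℂ)/2) * Complex.I_sq
  have hu2 : (starRingEnd ℂ) ((1-Complex.I)/2) * ((1-Complex.I)/2)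
      + (starRingEnd ℂ) ((1+Complex.I)/2) * ((1+Complex.I)/2) = 1 := by
    rw [hca, hcb]
    linear_combination (-(1:ℂ)/2) * Complex.I_sq
  have hu3 : (starRingEnd ℂ) ((1+Complex.I)/2) * ((1-Complex.I)/2)
      + (starRingEnd ℂ) ((1-Complex.I)/2) * ((1+Complex.I)/2) = 0 := by
    rw [hca, hcb]
    linear_combination ((1:ℂ)/2) * Complex.I_sq
  have hv1 : (starRingEnd ℂ) ((s:ℂ)) * (s:ℂ) + (starRingEnd ℂ) ((s:ℂ)) * (s:ℂ) = 1 := by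
    rw [hconjs]
    linear_combination (2:ℂ) * hs
  have hv2 : (starRingEnd ℂ) ((s:ℂ)) * (s:ℂ) + (starRingEnd ℂ) (-(s:ℂ)) * (-(s:ℂ)) = 1 := by
    rw [map_neg, hconjs]
    linear_combination (2:ℂ) * hs
  have hv3 : (starRingEnd ℂ) ((s:ℂ)) * (s:ℂ) + (starRingEnd ℂ) ((s:ℂ)) * (-(s:ℂ)) = 0 := by
    rw [hconjs]
    ring
  set w₀ : Matrix.unitaryGroup (Fin n) ℂ :=
    Stmt8Aux.plantU i j ((1+Complex.I)/2) ((1-Complex.I)/2) ((1-Complex.I)/2) ((1+Complex.I)/2)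
      hij hu1 hu2 hu3 with hw₀
  set v₀ : Matrix.unitaryGroup (Fin n) ℂ :=
    Stmt8Aux.plantU i j (s:ℂ) (s:ℂ) (s:ℂ) (-(s:ℂ)) hij hv1 hv2 hv3 with hv₀
  have hkey : ∀ u, F i j u + F i j (u * w₀)
      = (1/2) * (G i (u * v₀) + G j (u * v₀)) := by
    intro u
    rw [hF, hF, hG, hG]
    rw [Stmt8Aux.uFrame_mul_i hij _ _ _ _ u w₀ rfl, Stmt8Aux.uFrame_mul_j hij _ _ _ _ u w₀ rfl,
      Stmt8Aux.uFrame_mul_i hij _ _ _ _ u v₀ rfl, Stmt8Aux.uFrame_mul_j hij _ _ _ _ u v₀ rfl]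
    have hkc := 𝓡.key (uFrame u i) (uFrame u j) s hs
    calc (𝓡.R (uFrame u i) (uFrame u i) (uFrame u j) (uFrame u j)).re
          + (𝓡.R (((1+Complex.I)/2) • uFrame u i + ((1-Complex.I)/2) • uFrame u j)
              (((1+Complex.I)/2) • uFrame u i + ((1-Complex.I)/2) • uFrame u j)
              (((1-Complex.I)/2) • uFrame u i + ((1+Complex.I)/2) • uFrame u j)
              (((1-Complex.I)/2) • uFrame u i + ((1+Complex.I)/2) • uFrame u j)).re
        = (𝓡.R (uFrame u i) (uFrame u i) (uFrame u j) (uFrame u j)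
          + 𝓡.R (((1+Complex.I)/2) • uFrame u i + ((1-Complex.I)/2) • uFrame u j)
              (((1+Complex.I)/2) • uFrame u i + ((1-Complex.I)/2) • uFrame u j)
              (((1-Complex.I)/2) • uFrame u i + ((1+Complex.I)/2) • uFrame u j)
              (((1-Complex.I)/2) • uFrame u i + ((1+Complex.I)/2) • uFrame u j)).re := by
          rw [Complex.add_re]
      _ = (((1:ℂ)/2) * (𝓡.R ((s:ℂ) • uFrame u i + (s:ℂ) • uFrame u j)
              ((s:ℂ) • uFrame u i + (s:ℂ) • uFrame u j)
              ((s:ℂ) • uFrame u i + (s:ℂ) • uFrame u j)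
              ((s:ℂ) • uFrame u i + (s:ℂ) • uFrame u j)
            + 𝓡.R ((s:ℂ) • uFrame u i + (-(s:ℂ)) • uFrame u j)
              ((s:ℂ) • uFrame u i + (-(s:ℂ)) • uFrame u j)
              ((s:ℂ) • uFrame u i + (-(s:ℂ)) • uFrame u j)
              ((s:ℂ) • uFrame u i + (-(s:ℂ)) • uFrame u j))).re := by
          rw [hkc]
      _ = (1/2) * ((𝓡.R ((s:ℂ) • uFrame u i + (s:ℂ) • uFrame u j)
              ((s:ℂ) • uFrame u i + (s:ℂ) • uFrame u j)
              ((s:ℂ) • uFrame u i + (s:ℂ) • uFrame u j)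
              ((s:ℂ) • uFrame u i + (s:ℂ) • uFrame u j)).re
            + (𝓡.R ((s:ℂ) • uFrame u i + (-(s:ℂ)) • uFrame u j)
              ((s:ℂ) • uFrame u i + (-(s:ℂ)) • uFrame u j)
              ((s:ℂ) • uFrame u i + (-(s:ℂ)) • uFrame u j)
              ((s:ℂ) • uFrame u i + (-(s:ℂ)) • uFrame u j)).re) := by
          simp [Complex.mul_re, Complex.add_re, Complex.div_re]
  -- integrate
  have hFwint : Integrable (fun u => F i j (u * w₀)) ν := hFint.comp_mul_right w₀
  have hGiv : Integrable (fun u => G i (u * v₀)) ν := (hGint i).comp_mul_right v₀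
  have hGjv : Integrable (fun u => G j (u * v₀)) ν := (hGint j).comp_mul_right v₀
  have E0 : ∫ u, (F i j u + F i j (u * w₀)) ∂ν
      = ∫ u, (1/2) * (G i (u * v₀) + G j (u * v₀)) ∂ν :=
    integral_congr_ae (Filter.Eventually.of_forall fun u => hkey u)
  have E1 : ∫ u, (F i j u + F i j (u * w₀)) ∂ν = 2 * ∫ u, F i j u ∂ν := by
    rw [integral_add hFint hFwint, integral_mul_right_eq_self (F i j) w₀]
    ring
  have E2 : ∫ u, (1/2) * (G i (u * v₀) + G j (u * v₀)) ∂ν = ∫ u, G k u ∂ν := by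
    rw [integral_const_mul, integral_add hGiv hGjv,
      integral_mul_right_eq_self (G i) v₀, integral_mul_right_eq_self (G j) v₀,
      hGswap i k, hGswap j k]
    ring
  rw [← E1, E0, E2]

end
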